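/- Let Σ be n×n symmetric positive definite, and for conditioning sets c(i) ⊆ {1,…,i−1}, define the matrix V column by column via V_{c̄(i), i} = u_i · (u_{i,1})^{−1/2} with u_i = (Σ_{c̄(i),c̄(i)})⁻¹ e₁, c̄(i) = (i, c(i)), and V_{j,i} = 0 for j ∉ c̄(i). Then V is upper triangular with positive diagonal entries, and the matrix Σ_V := (V Vᵀ)⁻¹ is symmetric positive definite. -/

import Mathlib

open Matrix Finset

/-- The Vecchia inverse-Cholesky factor, built column by column:
column `i` is supported on the ordered index set `c̄(i)` (enumerated by `ι i`, whose
first element is `i`), with entries `V_{c̄(i), i} = u_i · (u_{i,1})^{−1/2}` where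
`u_i = (Σ_{c̄(i),c̄(i)})⁻¹ e₁`, and zeros elsewhere. -/
noncomputable def vecchiaFactor {n : ℕ} (S : Matrix (Fin n) (Fin n) ℝ) (k : Fin n → ℕ)
    (ι : (i : Fin n) → Fin (k i + 1) → Fin n) : Matrix (Fin n) (Fin n) ℝ :=
  fun j i =>
    ∑ m : Fin (k i + 1),
      if ι i m = j then
        (((S.submatrix (ι i) (ι i))⁻¹).mulVec (Pi.single 0 1)) m *
          ((((S.submatrix (ι i) (ι i))⁻¹).mulVec (Pi.single 0 1)) 0) ^ (-(1 : ℝ) / 2)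
      else 0

/-- Positive-definiteness is inherited by submatrices along injective maps. -/
lemma posDef_submatrix_of_injective {m n : Type*} [Fintype m] [Fintype n] [DecidableEq m]
    [DecidableEq n] {S : Matrix n n ℝ} (hS : S.PosDef) {e : m → n}
    (he : Function.Injective e) : (S.submatrix e e).PosDef := by
  refine Matrix.PosDef.of_dotProduct_mulVec_pos ?_ ?_
  · rw [Matrix.IsHermitian, Matrix.conjTranspose_submatrix, hS.isHermitian.eq]
  · intro x hx
    set y : n → ℝ := fun j => ∑ a, if e a = j then x a else 0 with hy
    have hyx : ∀ a, y (e a) = x a := by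
      intro a
      simp only [hy, he.eq_iff]
      simp [Finset.sum_ite_eq']
    have hyne : y ≠ 0 := by
      intro h
      apply hx
      funext a
      have := hyx a
      rw [h] at this
      simpa using this.symm
    have h1 : ∀ i : n, (S *ᵥ y) i = ∑ b, S i (e b) * x b := by
      intro i
      simp only [mulVec, dotProduct, hy, Finset.mul_sum, mul_ite, mul_zero]
      rw [Finset.sum_comm]
      refine Finset.sum_congr rfl fun b _ => ?_
      simp [Finset.sum_ite_eq]
    have key : dotProduct (star x) ((S.submatrix e e) *ᵥ x) = dotProduct (star y) (S *ᵥ y) := by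
      simp only [star_trivial, dotProduct]
      calc ∑ a, x a * ((S.submatrix e e) *ᵥ x) a
          = ∑ a, x a * ∑ b, S (e a) (e b) * x b := by
            refine Finset.sum_congr rfl fun a _ => ?_
            simp [mulVec, dotProduct, submatrix]
        _ = ∑ j, y j * (S *ᵥ y) j := by
            simp only [h1, hy, Finset.sum_mul, ite_mul, zero_mul]
            rw [Finset.sum_comm]
            refine Finset.sum_congr rfl fun a _ => ?_
            simp [Finset.sum_ite_eq, ← hy, h1]
    rw [key]
    exact hS.dotProduct_mulVec_pos hyne

/-- For `Σ` symmetric positive definite and conditioning sets `c(i) ⊆ {1,…,i−1}`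
(so `ι i` is injective, `ι i 0 = i`, and all other elements are `< i`), the Vecchia
factor `V` is upper triangular with positive diagonal, and `Σ_V := (V Vᵀ)⁻¹` is
symmetric positive definite. -/
theorem vecchia_valid {n : ℕ} (S : Matrix (Fin n) (Fin n) ℝ) (hS : S.PosDef)
    (k : Fin n → ℕ) (ι : (i : Fin n) → Fin (k i + 1) → Fin n)
    (hinj : ∀ i, Function.Injective (ι i)) (h0 : ∀ i, ι i 0 = i)
    (hlt : ∀ (i : Fin n) (m : Fin (k i + 1)), m ≠ 0 → ι i m < i) :
    (∀ j i : Fin n, i < j → vecchiaFactor S k ι j i = 0) ∧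
    (∀ i : Fin n, 0 < vecchiaFactor S k ι i i) ∧
    ((vecchiaFactor S k ι * (vecchiaFactor S k ι)ᵀ)⁻¹).PosDef := by
  set V := vecchiaFactor S k ι with hV
  -- upper triangular
  have htri : ∀ j i : Fin n, i < j → V j i = 0 := by
    intro j i hij
    apply Finset.sum_eq_zero
    intro m _
    rw [if_neg]
    intro h
    have : ι i m ≤ i := by
      by_cases hm : m = 0
      · rw [hm, h0]
      · exact le_of_lt (hlt i m hm)
    rw [h] at this
    exact absurd hij (not_lt.mpr this)
  -- positivity of the leading entry of u
  have hu0 : ∀ i : Fin n,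
      ((((S.submatrix (ι i) (ι i))⁻¹).mulVec (Pi.single 0 1)) 0) > 0 := by
    intro i
    have hsub : (S.submatrix (ι i) (ι i)).PosDef :=
      posDef_submatrix_of_injective hS (hinj i)
    have hinv : ((S.submatrix (ι i) (ι i))⁻¹).PosDef := hsub.inv
    have hne : (Pi.single 0 1 : Fin (k i + 1) → ℝ) ≠ 0 := by
      intro h
      have := congrFun h 0
      simp at this
    have := hinv.dotProduct_mulVec_pos hne
    rw [star_trivial] at this
    rwa [single_dotProduct, one_mul] at this
  -- positive diagonal
  have hdiag : ∀ i : Fin n, 0 < V i i := by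
    intro i
    have hsum : V i i =
        (((S.submatrix (ι i) (ι i))⁻¹).mulVec (Pi.single 0 1)) 0 *
          ((((S.submatrix (ι i) (ι i))⁻¹).mulVec (Pi.single 0 1)) 0) ^ (-(1 : ℝ) / 2) := by
      rw [hV, vecchiaFactor, Finset.sum_eq_single 0]
      · rw [if_pos (h0 i)]
      · intro m _ hm
        rw [if_neg]
        intro h
        exact hm ((hinj i) (h.trans (h0 i).symm))
      · intro h
        exact absurd (Finset.mem_univ 0) h
    rw [hsum]
    exact mul_pos (hu0 i) (Real.rpow_pos_of_pos (hu0 i) _)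
  refine ⟨htri, hdiag, ?_⟩
  -- V is invertible
  have hbt : V.BlockTriangular id := fun i j h => htri i j h
  have hdet : V.det ≠ 0 := by
    rw [Matrix.det_of_upperTriangular hbt]
    exact ne_of_gt (Finset.prod_pos fun i _ => hdiag i)
  have hunit : IsUnit V.det := isUnit_iff_ne_zero.mpr hdet
  have hunitT : IsUnit Vᵀ.det := by rwa [Matrix.det_transpose]
  -- V * Vᵀ is positive definite
  have hpd : (V * Vᵀ).PosDef := by
    refine Matrix.PosDef.of_dotProduct_mulVec_pos ?_ ?_
    · have := Matrix.isHermitian_mul_conjTranspose_self V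
      simpa using this
    · intro x hx
      have hcalc : dotProduct (star x) ((V * Vᵀ) *ᵥ x) =
          dotProduct (Vᵀ *ᵥ x) (Vᵀ *ᵥ x) := by
        rw [star_trivial, ← Matrix.mulVec_mulVec, Matrix.dotProduct_mulVec,
          ← Matrix.mulVec_transpose]
      rw [hcalc]
      have hwne : Vᵀ *ᵥ x ≠ 0 := by
        intro h
        apply hx
        have : (Vᵀ)⁻¹ *ᵥ (Vᵀ *ᵥ x) = x := by
          rw [Matrix.mulVec_mulVec, Matrix.nonsing_inv_mul _ hunitT, Matrix.one_mulVec]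
        rw [h, Matrix.mulVec_zero] at this
        exact this.symm
      have hnonneg : 0 ≤ dotProduct (Vᵀ *ᵥ x) (Vᵀ *ᵥ x) :=
        Finset.sum_nonneg fun i _ => mul_self_nonneg _
      rcases hnonneg.lt_or_eq with h | h
      · exact h
      · exact absurd (dotProduct_self_eq_zero.mp h.symm) hwne
  exact hpd.inv
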